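/- For every even n ≥ 4, the wheel graph W_n satisfies sn(W_n) = 2. -/

import Mathlib

open SimpleGraph

/-- `C₀` is a Sudoku coloring of `G` on the vertex set `S`, with colors in `Fin k`:
there is exactly one proper `k`-coloring of `G` that restricts to `C₀` on `S`.
(Note that such a `C₀` is automatically a proper coloring of the induced subgraph `G[S]`.) -/
def IsSudokuColoring {V : Type*} (G : SimpleGraph V) (k : ℕ) (S : Set V)
    (C₀ : V → Fin k) : Prop :=
  ∃! c : G.Coloring (Fin k), ∀ v ∈ S, c v = C₀ v

/-- The Sudoku number of a finite graph `G`: the minimum cardinality of a set `S` of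
vertices carrying a Sudoku coloring of `G` (with `k = χ(G)` colors). -/
noncomputable def sudokuNumber {V : Type*} [Fintype V] (G : SimpleGraph V) : ℕ :=
  sInf {n | ∃ (S : Finset V) (C₀ : V → Fin G.chromaticNumber.toNat),
    IsSudokuColoring G G.chromaticNumber.toNat S C₀ ∧ S.card = n}

/-- The wheel graph `W_n`, obtained from the cycle `C_n = v_1 v_2 ⋯ v_n v_1` (vertices
`0, …, n - 1`) by joining a new vertex `u` (vertex `n`) to every vertex of the cycle. -/
def wheelGraph (n : ℕ) : SimpleGraph (Fin (n + 1)) :=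
  SimpleGraph.fromRel fun a b =>
    ((a : ℕ) + 1 = (b : ℕ) ∧ (b : ℕ) < n) ∨
    ((a : ℕ) = 0 ∧ (b : ℕ) = n - 1) ∨ (b : ℕ) = n

section Aux

open Fin.NatCast

variable {n : ℕ}

lemma wheel_val {i : ℕ} (h : i < n + 1) : ((i : Fin (n+1)) : ℕ) = i :=
  Fin.val_cast_of_lt h

lemma wheel_adj_succ {i : ℕ} (h : i + 1 < n) :
    (wheelGraph n).Adj (i : Fin (n+1)) ((i+1 : ℕ) : Fin (n+1)) := by
  refine ⟨?_, Or.inl (Or.inl ?_)⟩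
  · simp only [ne_eq, Fin.ext_iff, wheel_val (by omega : i < n + 1),
      wheel_val (by omega : i + 1 < n + 1)]
    omega
  · rw [wheel_val (by omega : i < n + 1), wheel_val (by omega : i + 1 < n + 1)]
    exact ⟨rfl, h⟩

lemma wheel_adj_hub {i : ℕ} (h : i < n) :
    (wheelGraph n).Adj (i : Fin (n+1)) ((n : ℕ) : Fin (n+1)) := by
  refine ⟨?_, Or.inl (Or.inr (Or.inr ?_))⟩
  · simp only [ne_eq, Fin.ext_iff, wheel_val (by omega : i < n + 1),
      wheel_val (by omega : n < n + 1)]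
    omega
  · exact wheel_val (by omega)

lemma wheel_adj_wrap (h : 2 ≤ n) :
    (wheelGraph n).Adj ((0 : ℕ) : Fin (n+1)) ((n - 1 : ℕ) : Fin (n+1)) := by
  refine ⟨?_, Or.inl (Or.inr (Or.inl ?_))⟩
  · simp only [ne_eq, Fin.ext_iff, wheel_val (by omega : 0 < n + 1),
      wheel_val (by omega : n - 1 < n + 1)]
    omega
  · rw [wheel_val (by omega : (0:ℕ) < n + 1), wheel_val (by omega : n - 1 < n + 1)]
    exact ⟨rfl, rfl⟩

/-- the canonical coloring of the wheel -/
def wheelCol (n : ℕ) : Fin (n + 1) → Fin 3 :=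
  fun v => if (v : ℕ) = n then 2 else ⟨(v : ℕ) % 2, by omega⟩

lemma wheelCol_val (w : Fin (n+1)) :
    ((wheelCol n w : Fin 3) : ℕ) = if (w : ℕ) = n then 2 else (w : ℕ) % 2 := by
  unfold wheelCol; split <;> rfl

lemma wheelCol_valid (hn : 4 ≤ n) (he : n % 2 = 0) {u v : Fin (n+1)}
    (h : (wheelGraph n).Adj u v) : wheelCol n u ≠ wheelCol n v := by
  have hu := u.isLt
  have hv := v.isLt
  obtain ⟨hne, h | h⟩ := h <;>
  · have hne' : (u : ℕ) ≠ (v : ℕ) := fun hh => hne (Fin.ext hh)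
    rw [ne_eq, Fin.ext_iff, wheelCol_val, wheelCol_val]
    rcases h with ⟨h1, h2⟩ | ⟨h1, h2⟩ | h1 <;> split_ifs <;> omega

def wheelColoring (hn : 4 ≤ n) (he : n % 2 = 0) : (wheelGraph n).Coloring (Fin 3) :=
  SimpleGraph.Coloring.mk (wheelCol n) (fun h => wheelCol_valid hn he h)

lemma wheel_coloring_unique (hn : 4 ≤ n) (he : n % 2 = 0)
    (c : (wheelGraph n).Coloring (Fin 3))
    (h0 : c ((0 : ℕ) : Fin (n+1)) = 0) (hh : c ((n : ℕ) : Fin (n+1)) = 2) :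
    ∀ v, c v = wheelCol n v := by
  have key : ∀ i, i < n → c ((i : ℕ) : Fin (n+1)) = ⟨i % 2, by omega⟩ := by
    intro i
    induction i with
    | zero => intro _; exact h0.trans (by rfl)
    | succ k ih =>
      intro hi
      have hk := ih (by omega)
      have h1 : c ((k + 1 : ℕ) : Fin (n+1)) ≠ c ((k : ℕ) : Fin (n+1)) :=
        (c.valid (wheel_adj_succ hi)).symm
      have h2 : c ((k + 1 : ℕ) : Fin (n+1)) ≠ c ((n : ℕ) : Fin (n+1)) :=
        c.valid (wheel_adj_hub hi)
      rw [hk] at h1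
      rw [hh] at h2
      have hlt := (c ((k + 1 : ℕ) : Fin (n+1))).isLt
      simp only [Fin.ext_iff, ne_eq] at h1 h2 ⊢
      simp only [Fin.val_two] at h2
      omega
  intro v
  rcases Nat.lt_or_ge (v : ℕ) n with hv | hv
  · have hcast : ((((v : ℕ)) : ℕ) : Fin (n+1)) = v := Fin.cast_val_eq_self v
    have := key (v : ℕ) hv
    rw [hcast] at this
    rw [this]
    rw [Fin.ext_iff, wheelCol_val]
    simp [Nat.ne_of_lt hv]
  · have hvn : (v : ℕ) = n := by have := v.isLt; omega
    have hcast : (((n : ℕ)) : Fin (n+1)) = v := by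
      rw [Fin.ext_iff, wheel_val (by omega : n < n + 1), hvn]
    rw [← hcast, hh, Fin.ext_iff, wheelCol_val]
    simp [wheel_val (by omega : n < n + 1)]

lemma wheel_chromatic (hn : 4 ≤ n) (he : n % 2 = 0) :
    (wheelGraph n).chromaticNumber = 3 := by
  have hcol : (wheelGraph n).Colorable 3 := ⟨wheelColoring hn he⟩
  have hnot : ¬ (wheelGraph n).Colorable 2 := by
    rintro ⟨c⟩
    have a01 := c.valid (wheel_adj_succ (show 0 + 1 < n by omega))
    have a0h := c.valid (wheel_adj_hub (show 0 < n by omega))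
    have a1h := c.valid (wheel_adj_hub (show 0 + 1 < n by omega))
    have l0 := (c ((0 : ℕ) : Fin (n+1))).isLt
    have l1 := (c ((0 + 1 : ℕ) : Fin (n+1))).isLt
    have l2 := (c ((n : ℕ) : Fin (n+1))).isLt
    simp only [Fin.ext_iff, ne_eq] at a01 a0h a1h
    omega
  refine le_antisymm (hcol.chromaticNumber_le) ?_
  have h2 : ¬ (wheelGraph n).chromaticNumber ≤ 2 := by
    rw [show ((2:ℕ∞)) = ((2:ℕ):ℕ∞) by norm_num, chromaticNumber_le_iff_colorable]
    exact hnot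
  have := lt_of_not_ge h2
  exact Order.add_one_le_of_lt this

def sudokuSet {V : Type*} (G : SimpleGraph V) (k : ℕ) : Set ℕ :=
  {m | ∃ (S : Finset V) (C₀ : V → Fin k), IsSudokuColoring G k S C₀ ∧ S.card = m}

lemma fin3_aux : ∀ x : Fin 3, ∃ a b : Fin 3, a ≠ b ∧ a ≠ x ∧ b ≠ x ∧
    ∀ y : Fin 3, y ≠ a → y ≠ b → y = x := by decide

end Aux

open Fin.NatCast

/-- For every even `n ≥ 4`, the wheel graph `W_n` has Sudoku number 2. -/
theorem sudokuNumber_wheel_even (n : ℕ) (hn : 4 ≤ n) (he : Even n) :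
    sudokuNumber (wheelGraph n) = 2 := by
  have he' : n % 2 = 0 := Nat.even_iff.mp he
  have hχ : (wheelGraph n).chromaticNumber.toNat = 3 := by
    rw [wheel_chromatic hn he']; rfl
  show sInf (sudokuSet (wheelGraph n) (wheelGraph n).chromaticNumber.toNat) = 2
  rw [hχ]
  have hmem : 2 ∈ sudokuSet (wheelGraph n) 3 := by
    refine ⟨{((n : ℕ) : Fin (n+1)), ((0 : ℕ) : Fin (n+1))}, wheelCol n, ?_, ?_⟩
    · refine ⟨wheelColoring hn he', ?_, ?_⟩
      · intro v hv; rfl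
      · intro c hc
        have h0 : c ((0 : ℕ) : Fin (n+1)) = 0 := by
          have := hc ((0 : ℕ) : Fin (n+1)) (by simp)
          rw [this, Fin.ext_iff, wheelCol_val]
          simp [wheel_val (by omega : (0:ℕ) < n + 1)]
          omega
        have hh : c ((n : ℕ) : Fin (n+1)) = 2 := by
          have := hc ((n : ℕ) : Fin (n+1)) (by simp)
          rw [this, Fin.ext_iff, wheelCol_val]
          simp [wheel_val (by omega : n < n + 1)]
        exact DFunLike.ext _ _ (wheel_coloring_unique hn he' c h0 hh)
    · rw [Finset.card_insert_of_notMem, Finset.card_singleton]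
      simp only [Finset.mem_singleton, Fin.ext_iff,
        wheel_val (by omega : n < n + 1), wheel_val (by omega : (0:ℕ) < n + 1)]
      omega
  refine le_antisymm (Nat.sInf_le hmem) ?_
  refine le_csInf ⟨2, hmem⟩ ?_
  rintro m ⟨S, C₀, ⟨c, hc, huniq⟩, rfl⟩
  by_contra hlt
  push_neg at hlt
  have hcard : S.card ≤ 1 := by omega
  have hone : ∀ v ∈ S, ∀ w ∈ S, v = w := Finset.card_le_one.mp hcard
  obtain ⟨s, hsmem⟩ : ∃ s : Fin (n+1), ∀ v ∈ S, v = s := by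
    rcases S.eq_empty_or_nonempty with h | ⟨s, hs⟩
    · exact ⟨((0:ℕ) : Fin (n+1)), by simp [h]⟩
    · exact ⟨s, fun v hv => hone v hv s hs⟩
  obtain ⟨a, b, hab, has, hbs, hkey⟩ := fin3_aux (c s)
  set σ := Equiv.swap a b with hσ
  let c' : (wheelGraph n).Coloring (Fin 3) :=
    SimpleGraph.Coloring.mk (fun v => σ (c v)) (fun h hc' => c.valid h (σ.injective hc'))
  have hc' : ∀ v ∈ (S : Set (Fin (n+1))), c' v = C₀ v := by
    intro v hv
    have hvs := hsmem v hv
    subst hvs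
    have h1 : c' v = c v := Equiv.swap_apply_of_ne_of_ne (Ne.symm has) (Ne.symm hbs)
    rw [h1]
    exact hc v hv
  have heq : c' = c := huniq c' hc'
  have hall : ∀ v, c v = c s := by
    intro v
    have h1 : σ (c v) = c v := DFunLike.congr_fun heq v
    refine hkey _ (fun h => ?_) (fun h => ?_)
    · rw [h, Equiv.swap_apply_left] at h1; exact hab h1.symm
    · rw [h, Equiv.swap_apply_right] at h1; exact hab h1
  exact c.valid (wheel_adj_hub (show 0 < n by omega)) ((hall _).trans (hall _).symm)
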